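/- For any natural number r, the univariate polynomial given by the Taylor expansion of e^{-t} truncated at degree 2r, namely p(t) = Σ_{k=0}^{2r} (-1)^k t^k / k!, is a sum of squares of polynomials with real coefficients. -/
import Mathlib
open Polynomial Filter

noncomputable def S (n : ℕ) : ℝ[X] :=
  ∑ k ∈ Finset.range (n+1), C ((-1:ℝ)^k / (Nat.factorial k)) * X^k

lemma S_coeff (n k : ℕ) : (S n).coeff k = if k ≤ n then (-1:ℝ)^k / (Nat.factorial k) else 0 := by
  simp [S, Polynomial.finset_sum_coeff, coeff_C_mul, coeff_X_pow, Finset.sum_ite_eq,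
    Nat.lt_succ_iff]

lemma S_coeff_ne (n : ℕ) : (S n).coeff n ≠ 0 := by
  rw [S_coeff]
  simp only [le_refl, if_true]
  exact div_ne_zero (pow_ne_zero _ (by norm_num))
    (Nat.cast_ne_zero.2 n.factorial_ne_zero)

lemma S_natDegree (n : ℕ) : (S n).natDegree = n := by
  have h1 : (S n).natDegree ≤ n := by
    apply Polynomial.natDegree_sum_le_of_forall_le
    intro k hk
    calc (C ((-1:ℝ)^k / (Nat.factorial k)) * X^k).natDegree
        ≤ (X^k : ℝ[X]).natDegree := Polynomial.natDegree_C_mul_le _ _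
      _ = k := Polynomial.natDegree_X_pow k
      _ ≤ n := Nat.lt_succ_iff.mp (Finset.mem_range.mp hk)
  exact le_antisymm h1 (Polynomial.le_natDegree_of_ne_zero (S_coeff_ne n))

lemma S_ne_zero (n : ℕ) : S n ≠ 0 := fun h => S_coeff_ne n (by rw [h]; simp)

lemma S_leadingCoeff (n : ℕ) : (S n).leadingCoeff = (-1:ℝ)^n / (Nat.factorial n) := by
  rw [Polynomial.leadingCoeff, S_natDegree, S_coeff]; simp

lemma S_derivative (n : ℕ) : (S (n+1)).derivative = -(S n) := by
  unfold S
  rw [derivative_sum]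
  rw [Finset.sum_range_succ']
  simp only [derivative_C_mul, derivative_X_pow]
  rw [← Finset.sum_neg_distrib]
  simp only [Nat.cast_zero, C_0, zero_mul, mul_zero, add_zero, Nat.add_sub_cancel]
  apply Finset.sum_congr rfl
  intro k hk
  rw [← mul_assoc, ← C_mul,
    show -(C ((-1:ℝ)^k / (Nat.factorial k)) * X^k) = C (-((-1:ℝ)^k / (Nat.factorial k))) * X^k by
      rw [C_neg, neg_mul]]
  congr 1
  have h2 : (Nat.factorial k : ℝ) ≠ 0 := Nat.cast_ne_zero.2 k.factorial_ne_zero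
  have h : ((k:ℝ)+1) ≠ 0 := by positivity
  push_cast [Nat.factorial_succ]
  field_simp
  ring

lemma S_eval_succ (n : ℕ) (t : ℝ) :
    (S (n+1)).eval t = (S n).eval t + (-1:ℝ)^(n+1) * t^(n+1) / (Nat.factorial (n+1)) := by
  unfold S
  rw [Finset.sum_range_succ]
  simp only [eval_add, eval_mul, eval_C, eval_pow, eval_X]
  ring

noncomputable def T (n : ℕ) : ℝ[X] :=
  ∑ k ∈ Finset.range (n+1), C ((1:ℝ) / (Nat.factorial k)) * X^k

lemma T_coeff (n k : ℕ) : (T n).coeff k = if k ≤ n then (1:ℝ) / (Nat.factorial k) else 0 := by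
  simp [T, Polynomial.finset_sum_coeff, coeff_C_mul, coeff_X_pow, Finset.sum_ite_eq,
    Nat.lt_succ_iff]

lemma T_coeff_ne (n : ℕ) : (T n).coeff n ≠ 0 := by
  rw [T_coeff]
  simp only [le_refl, if_true]
  exact div_ne_zero one_ne_zero (Nat.cast_ne_zero.2 n.factorial_ne_zero)

lemma T_natDegree (n : ℕ) : (T n).natDegree = n := by
  have h1 : (T n).natDegree ≤ n := by
    apply Polynomial.natDegree_sum_le_of_forall_le
    intro k hk
    calc (C ((1:ℝ) / (Nat.factorial k)) * X^k).natDegree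
        ≤ (X^k : ℝ[X]).natDegree := Polynomial.natDegree_C_mul_le _ _
      _ = k := Polynomial.natDegree_X_pow k
      _ ≤ n := Nat.lt_succ_iff.mp (Finset.mem_range.mp hk)
  exact le_antisymm h1 (Polynomial.le_natDegree_of_ne_zero (T_coeff_ne n))

lemma T_ne_zero (n : ℕ) : T n ≠ 0 := fun h => T_coeff_ne n (by rw [h]; simp)

lemma T_leadingCoeff (n : ℕ) : (T n).leadingCoeff = (1:ℝ) / (Nat.factorial n) := by
  rw [Polynomial.leadingCoeff, T_natDegree, T_coeff]; simp

lemma S_eval_neg (n : ℕ) (t : ℝ) : (S n).eval (-t) = (T n).eval t := by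
  unfold S T
  simp only [eval_finset_sum, eval_mul, eval_C, eval_pow, eval_X]
  apply Finset.sum_congr rfl
  intro k _
  rw [div_mul_eq_mul_div, div_mul_eq_mul_div, one_mul]
  congr 1
  rw [← neg_pow, neg_neg]

lemma S_eval_nonneg (r : ℕ) (t : ℝ) : 0 ≤ (S (2*r)).eval t := by
  rcases Nat.eq_zero_or_pos r with rfl | hr
  · simp [S]
  have hn : 0 < 2*r := by omega
  have hdeg : 0 < (S (2*r)).degree := by
    rw [degree_eq_natDegree (S_ne_zero _), S_natDegree]
    exact_mod_cast hn
  have heven : Even (2*r) := even_two_mul r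
  have h1 : Tendsto (fun x => (S (2*r)).eval x) atTop atTop := by
    apply tendsto_atTop_of_leadingCoeff_nonneg _ hdeg
    rw [S_leadingCoeff, heven.neg_one_pow]
    positivity
  have h2 : Tendsto (fun x => (S (2*r)).eval x) atBot atTop := by
    have hT : Tendsto (fun x => (T (2*r)).eval x) atTop atTop := by
      apply tendsto_atTop_of_leadingCoeff_nonneg
      · rw [degree_eq_natDegree (T_ne_zero _), T_natDegree]; exact_mod_cast hn
      · rw [T_leadingCoeff]; positivity
    have : Tendsto (fun x => (S (2*r)).eval (-x)) atTop atTop := by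
      simpa only [S_eval_neg] using hT
    have hcomp := this.comp tendsto_neg_atBot_atTop
    simpa only [Function.comp_def, neg_neg] using hcomp
  have hco : Tendsto (fun x => (S (2*r)).eval x) (cocompact ℝ) atTop := by
    rw [cocompact_eq_atBot_atTop]
    exact tendsto_sup.2 ⟨h2, h1⟩
  obtain ⟨x₀, hx₀⟩ := (((S (2*r)).continuous)).exists_forall_le hco
  refine le_trans ?_ (hx₀ t)
  obtain ⟨m, hm⟩ : ∃ m, 2*r = m + 1 := ⟨2*r - 1, by omega⟩
  have hloc : IsLocalMin (fun x => (S (2*r)).eval x) x₀ := Filter.Eventually.of_forall hx₀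
  have hd := hloc.deriv_eq_zero
  rw [Polynomial.deriv, hm, S_derivative] at hd
  simp only [eval_neg, neg_eq_zero] at hd
  rw [hm, S_eval_succ, hd, zero_add, show m + 1 = 2*r from hm.symm, heven.neg_one_pow, one_mul]
  have := heven.pow_nonneg (a := x₀)
  positivity

lemma sos_aux : ∀ n : ℕ, ∀ p : ℝ[X], p.natDegree ≤ n → (∀ x, 0 ≤ p.eval x) →
    ∃ a b : ℝ[X], p = a^2 + b^2 := by
  intro n
  induction n using Nat.strong_induction_on with
  | _ n ih =>
  intro p hdeg hpos
  by_cases hp0 : p = 0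
  · exact ⟨0, 0, by simp [hp0]⟩
  by_cases hd0 : p.natDegree = 0
  · obtain ⟨c, rfl⟩ := Polynomial.natDegree_eq_zero.mp hd0
    have hc : 0 ≤ c := by simpa using hpos 0
    exact ⟨C (Real.sqrt c), 0, by
      rw [← C_pow, Real.sq_sqrt hc]; simp⟩
  by_cases hroot : ∃ a, p.eval a = 0
  · -- real root case
    obtain ⟨a, ha⟩ := hroot
    obtain ⟨q, hq⟩ := Polynomial.dvd_iff_isRoot.mpr ha
    have hqright : ∀ x ∈ Set.Ioi a, 0 ≤ q.eval x := by
      intro x hx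
      have hpx : 0 ≤ (x - a) * q.eval x := by
        have := hpos x
        rwa [hq, eval_mul, eval_sub, eval_X, eval_C] at this
      exact (mul_nonneg_iff_of_pos_left (by simpa using hx : (0:ℝ) < x - a)).mp hpx
    have hqleft : ∀ x ∈ Set.Iio a, q.eval x ≤ 0 := by
      intro x hx
      have hpx : 0 ≤ (x - a) * q.eval x := by
        have := hpos x
        rwa [hq, eval_mul, eval_sub, eval_X, eval_C] at this
      nlinarith [Set.mem_Iio.mp hx]
    have hqa : q.eval a = 0 := by
      have ht : Filter.Tendsto (fun x => q.eval x) (nhdsWithin a (Set.Ioi a)) (nhds (q.eval a)) :=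
        (q.continuous.tendsto a).mono_left nhdsWithin_le_nhds
      have ht' : Filter.Tendsto (fun x => q.eval x) (nhdsWithin a (Set.Iio a)) (nhds (q.eval a)) :=
        (q.continuous.tendsto a).mono_left nhdsWithin_le_nhds
      have h1 : 0 ≤ q.eval a :=
        ge_of_tendsto ht (eventually_nhdsWithin_of_forall hqright)
      have h2 : q.eval a ≤ 0 :=
        le_of_tendsto ht' (eventually_nhdsWithin_of_forall hqleft)
      linarith
    obtain ⟨h, hh⟩ := Polynomial.dvd_iff_isRoot.mpr hqa
    have hp2 : p = (X - C a)^2 * h := by rw [hq, hh]; ring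
    have hhpos : ∀ x, 0 ≤ h.eval x := by
      intro x
      by_cases hxa : x = a
      · subst hxa
        have ht : Filter.Tendsto (fun y => h.eval y) (nhdsWithin x {x}ᶜ) (nhds (h.eval x)) :=
          (h.continuous.tendsto x).mono_left nhdsWithin_le_nhds
        refine ge_of_tendsto ht (eventually_nhdsWithin_of_forall ?_)
        intro y hy
        have hpy : 0 ≤ (y - x)^2 * h.eval y := by
          have := hpos y
          rwa [hp2, eval_mul, eval_pow, eval_sub, eval_X, eval_C] at this
        have hy2 : (0:ℝ) < (y - x)^2 := by
          have : y - x ≠ 0 := sub_ne_zero.mpr hy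
          positivity
        exact (mul_nonneg_iff_of_pos_left hy2).mp hpy
      · have hpy : 0 ≤ (x - a)^2 * h.eval x := by
          have := hpos x
          rwa [hp2, eval_mul, eval_pow, eval_sub, eval_X, eval_C] at this
        have hy2 : (0:ℝ) < (x - a)^2 := by
          have : x - a ≠ 0 := sub_ne_zero.mpr hxa
          positivity
        exact (mul_nonneg_iff_of_pos_left hy2).mp hpy
    have hhne : h ≠ 0 := by rintro rfl; rw [mul_zero] at hp2; exact hp0 hp2
    have hdegh : h.natDegree + 2 = p.natDegree := by
      rw [hp2, natDegree_mul (pow_ne_zero _ (X_sub_C_ne_zero a)) hhne, natDegree_pow, natDegree_X_sub_C]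
      ring
    have hlt : h.natDegree < n := by omega
    obtain ⟨u, v, huv⟩ := ih h.natDegree hlt h le_rfl hhpos
    exact ⟨(X - C a) * u, (X - C a) * v, by rw [hp2, huv]; ring⟩
  · -- no real root case
    push_neg at hroot
    have hppos : ∀ x, 0 < p.eval x := fun x => (hpos x).lt_of_ne' (hroot x)
    obtain ⟨g₀, hirr₀, hdvd₀⟩ := WfDvdMonoid.exists_irreducible_factor
      (Polynomial.not_isUnit_of_natDegree_pos p (by omega)) hp0
    classical
    set g : ℝ[X] := normalize g₀ with hgdef
    have hg0ne : g₀ ≠ 0 := hirr₀.ne_zero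
    have hmonic : g.Monic := Polynomial.monic_normalize hg0ne
    have hirr : Irreducible g := (associated_normalize g₀).irreducible hirr₀
    have hdvd : g ∣ p := dvd_trans (normalize_dvd_iff.mpr dvd_rfl) hdvd₀
    obtain ⟨h, hp2⟩ := hdvd
    have hgroot : ∀ x, g.eval x ≠ 0 := by
      intro x hx
      apply hroot x
      rw [hp2, eval_mul, hx, zero_mul]
    have hdeg2 : g.natDegree = 2 := by
      have hle := hirr.natDegree_le_two
      have h0 : g.natDegree ≠ 0 := by
        intro h0
        exact hirr.not_isUnit (hmonic.natDegree_eq_zero.mp h0 ▸ isUnit_one)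
      have h1 : g.natDegree ≠ 1 := by
        intro h1
        have heq := Polynomial.eq_X_add_C_of_natDegree_le_one h1.le
        have hc1 : g.coeff 1 = 1 := by
          have := hmonic.coeff_natDegree
          rwa [h1] at this
        apply hgroot (-(g.coeff 0))
        rw [heq, hc1]
        simp
      omega
    set b : ℝ := g.coeff 1 with hb
    set c : ℝ := g.coeff 0 with hc
    set d : ℝ := c - b^2/4 with hd
    have hc2 : g.coeff 2 = 1 := by
      have := hmonic.coeff_natDegree
      rwa [hdeg2] at this
    have hevalg : ∀ x, g.eval x = (x + b/2)^2 + d := by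
      intro x
      rw [Polynomial.eval_eq_sum_range, hdeg2]
      simp only [Finset.sum_range_succ, Finset.sum_range_zero, zero_add]
      rw [hc2]
      simp only [pow_zero, mul_one, pow_one, one_mul]
      rw [hd]
      ring
    have hdpos : 0 < d := by
      by_contra hcon
      push_neg at hcon
      apply hgroot (-(b/2) + Real.sqrt (-d))
      rw [hevalg]
      have : (-(b/2) + Real.sqrt (-d) + b/2) = Real.sqrt (-d) := by ring
      rw [this, Real.sq_sqrt (by linarith)]
      ring
    have hgpos : ∀ x, 0 < g.eval x := by
      intro x
      rw [hevalg]
      positivity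
    have hgsos : g = (X + C (b/2))^2 + (C (Real.sqrt d))^2 := by
      apply Polynomial.funext
      intro x
      simp only [eval_add, eval_pow, eval_X, eval_C]
      rw [hevalg, Real.sq_sqrt hdpos.le]
    have hhpos : ∀ x, 0 ≤ h.eval x := by
      intro x
      have hpx : 0 ≤ g.eval x * h.eval x := by
        have := hpos x
        rwa [hp2, eval_mul] at this
      exact (mul_nonneg_iff_of_pos_left (hgpos x)).mp hpx
    have hhne : h ≠ 0 := by rintro rfl; rw [mul_zero] at hp2; exact hp0 hp2
    have hdegh : h.natDegree + 2 = p.natDegree := by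
      rw [hp2, natDegree_mul (hmonic.ne_zero) hhne, hdeg2]
      ring
    have hlt : h.natDegree < n := by omega
    obtain ⟨u, v, huv⟩ := ih h.natDegree hlt h le_rfl hhpos
    refine ⟨(X + C (b/2)) * u - C (Real.sqrt d) * v,
      (X + C (b/2)) * v + C (Real.sqrt d) * u, ?_⟩
    rw [hp2, hgsos, huv]
    ring


/-- The degree-`2r` truncated Taylor polynomial of `e^{-t}` is a sum of squares of
real polynomials. -/
theorem taylor_exp_neg_truncated_isSumSq (r : ℕ) :
    ∃ (m : ℕ) (q : Fin m → Polynomial ℝ),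
      (∑ k ∈ Finset.range (2 * r + 1),
          Polynomial.C ((-1 : ℝ) ^ k / (Nat.factorial k)) * Polynomial.X ^ k)
        = ∑ i, (q i) ^ 2 := by
  obtain ⟨a, b, hab⟩ := sos_aux (S (2*r)).natDegree (S (2*r)) le_rfl (S_eval_nonneg r)
  refine ⟨2, ![a, b], ?_⟩
  have hS : (∑ k ∈ Finset.range (2 * r + 1),
      Polynomial.C ((-1 : ℝ) ^ k / (Nat.factorial k)) * Polynomial.X ^ k) = S (2*r) := rfl
  rw [hS, hab, Fin.sum_univ_two]
  simp
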